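/- As z → 1 within the slit plane, κ₁(z) = z + c(z)(1−z)^{3/2} where c(z) → 2√2/(3π); more precisely, lim_{z→1} (κ₁(z) − z)/(1−z)^{3/2} = 2√2/(3π). -/

import Mathlib

open Real Complex Filter

open Topology

/-- The slit plane `ℂ \ [1,∞) \ (−∞,−1]`. -/
def Dslit : Set ℂ := {z : ℂ | ¬(z.im = 0 ∧ (1 ≤ z.re ∨ z.re ≤ -1))}

/-- Analytic extension of the degree-1 arc-cosine kernel to the slit plane. -/
noncomputable def K1C (z : ℂ) : ℂ :=
  (z * ((Real.pi : ℂ) + Complex.I * Complex.log (z + Complex.I * ((1 - z ^ 2) ^ ((1 : ℂ) / 2))))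
    + (1 - z ^ 2) ^ ((1 : ℂ) / 2)) / (Real.pi : ℂ)

/- Auxiliary definitions -/

noncomputable def Uf (z : ℂ) : ℂ := (1 - z) ^ ((1 : ℂ) / 2)
noncomputable def Sf (z : ℂ) : ℂ := (1 + z) ^ ((1 : ℂ) / 2)
noncomputable def Gf (z : ℂ) : ℂ := Complex.I * Uf z * Sf z - (Uf z) ^ 2
noncomputable def Pf (g : ℂ) : ℂ := g - g ^ 2 / 2 + g ^ 3 / 3
noncomputable def Rf (z : ℂ) : ℂ := Complex.log (1 + Gf z) - Pf (Gf z)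
noncomputable def Qf (u s : ℂ) : ℂ :=
  s ^ 3 / 3 + Complex.I * u - u ^ 2 * s ^ 3 / 3 - (7 / 3) * Complex.I * u ^ 3
    + u ^ 4 * s + (4 / 3) * Complex.I * u ^ 5

lemma key_alg (u s z : ℂ) (hu : u ^ 2 = 1 - z) (hs : s ^ 2 = 1 + z) :
    Complex.I * z * Pf (Complex.I * u * s - u ^ 2) + u * s = u ^ 3 * Qf u s := by
  have hz : z = 1 - u ^ 2 := by linear_combination hu
  subst hz
  have hI : Complex.I ^ 2 = -1 := Complex.I_sq
  unfold Pf Qf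
  linear_combination
    (-(u ^ 3 * s) / 3 + u ^ 5 * s / 3 - Complex.I ^ 3 * u ^ 2 / 2 - Complex.I ^ 3 * u ^ 4 / 2
      + Complex.I ^ 3 * u ^ 6 + Complex.I ^ 4 * u ^ 3 * s / 3
      - Complex.I ^ 4 * u ^ 5 * s / 3) * hs
    + (u * s - 2 / 3 * u ^ 3 * s + u ^ 5 * s - 4 / 3 * u ^ 7 * s - Complex.I * u ^ 2
      - Complex.I * u ^ 4 / 2 + 5 / 2 * Complex.I * u ^ 6 - Complex.I * u ^ 8
      + 2 / 3 * Complex.I ^ 2 * u ^ 3 * s - Complex.I ^ 2 * u ^ 5 * s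
      + 1 / 3 * Complex.I ^ 2 * u ^ 7 * s) * hI

lemma tail_bound {g : ℂ} (hg : ‖g‖ ≤ 1 / 2) :
    ‖Complex.log (1 + g) - Pf g‖ ≤ 2 * ‖g‖ ^ 3 * ‖g‖ := by
  set h : ℂ → ℂ := fun w => Complex.log (1 + w) - Pf w with hh
  have hderiv : ∀ w ∈ Metric.closedBall (0 : ℂ) ‖g‖,
      HasDerivWithinAt h (-w ^ 3 / (1 + w)) (Metric.closedBall (0 : ℂ) ‖g‖) w := by
    intro w hw
    simp only [Metric.mem_closedBall, dist_zero_right] at hw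
    have hwn : ‖w‖ ≤ 1 / 2 := hw.trans hg
    have hre : 0 < (1 + w).re := by
      have hrw : |w.re| ≤ 1 / 2 := le_trans (Complex.abs_re_le_norm w) hwn
      simp only [Complex.add_re, Complex.one_re]
      linarith [abs_le.mp hrw]
    have hsp : (1 : ℂ) + w ∈ Complex.slitPlane := Or.inl hre
    have hne : (1 : ℂ) + w ≠ 0 := Complex.slitPlane_ne_zero hsp
    have h1 : HasDerivAt (fun w : ℂ => Complex.log (1 + w)) (1 / (1 + w)) w := by
      have := (HasDerivAt.clog ((hasDerivAt_id w).const_add 1) hsp)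
      simpa using this
    have h2 : HasDerivAt (fun w : ℂ => Pf w) (1 - w + w ^ 2) w := by
      unfold Pf
      have := (((hasDerivAt_id w).sub
        (((hasDerivAt_pow 2 w)).div_const 2)).add
        (((hasDerivAt_pow 3 w)).div_const 3))
      exact this.congr_deriv (by ring)
    have h3 : HasDerivAt h (1 / (1 + w) - (1 - w + w ^ 2)) w := h1.sub h2
    have heq : 1 / (1 + w) - (1 - w + w ^ 2) = -w ^ 3 / (1 + w) := by
      field_simp
      ring
    rw [heq] at h3
    exact h3.hasDerivWithinAt
  have hbound : ∀ w ∈ Metric.closedBall (0 : ℂ) ‖g‖, ‖-w ^ 3 / (1 + w)‖ ≤ 2 * ‖g‖ ^ 3 := by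
    intro w hw
    simp only [Metric.mem_closedBall, dist_zero_right] at hw
    have hwn : ‖w‖ ≤ 1 / 2 := hw.trans hg
    have hlow : (1 : ℝ) / 2 ≤ ‖(1 : ℂ) + w‖ := by
      have h1 : ‖(1 : ℂ)‖ ≤ ‖(1 : ℂ) + w‖ + ‖w‖ := by
        calc ‖(1 : ℂ)‖ = ‖(1 + w) + (-w)‖ := by ring_nf
          _ ≤ ‖(1 : ℂ) + w‖ + ‖-w‖ := norm_add_le _ _
          _ = ‖(1 : ℂ) + w‖ + ‖w‖ := by rw [norm_neg]
      have h2 : ‖(1 : ℂ)‖ = 1 := by simp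
      linarith
    rw [norm_div, norm_neg, norm_pow]
    rw [div_le_iff₀ (by linarith : (0:ℝ) < ‖(1:ℂ) + w‖)]
    have h1 : ‖w‖ ^ 3 ≤ ‖g‖ ^ 3 := by
      apply pow_le_pow_left₀ (norm_nonneg _) hw
    nlinarith [pow_nonneg (norm_nonneg g) 3]
  have := Convex.norm_image_sub_le_of_norm_hasDerivWithin_le hderiv hbound
    (convex_closedBall _ _) (Metric.mem_closedBall_self (norm_nonneg g))
    (by simp [Metric.mem_closedBall, dist_zero_right] : g ∈ Metric.closedBall (0 : ℂ) ‖g‖)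
  have h0 : h 0 = 0 := by simp [hh, Pf]
  simpa [h0] using this

lemma main_eq {z : ℂ} (hzD : z ∈ Dslit) (hb : ‖z - 1‖ < 1 / 4) :
    (K1C z - z) / ((1 - z) ^ ((3 : ℂ) / 2))
      = (Qf (Uf z) (Sf z) + Complex.I * z * (Rf z / (Uf z) ^ 3)) / (Real.pi : ℂ) := by
  have hre : |z.re - 1| < 1 / 4 := by
    have := Complex.abs_re_le_norm (z - 1)
    simp only [Complex.sub_re, Complex.one_re] at this
    linarith
  have him : |z.im| < 1 / 4 := by
    have := Complex.abs_im_le_norm (z - 1)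
    simp only [Complex.sub_im, Complex.one_im, sub_zero] at this
    linarith
  have hz1 : z ≠ 1 := by
    rintro rfl
    exact hzD ⟨by simp, Or.inl (by simp)⟩
  have h1z : (1 : ℂ) - z ≠ 0 := sub_ne_zero.mpr (Ne.symm hz1)
  have h2zre : 0 < (1 + z).re := by
    simp only [Complex.add_re, Complex.one_re]
    linarith [(abs_lt.mp hre).1]
  have h2z : (1 : ℂ) + z ≠ 0 := by
    intro h
    rw [h] at h2zre
    simp at h2zre
  have hπ : (Real.pi : ℂ) ≠ 0 := Complex.ofReal_ne_zero.mpr Real.pi_ne_zero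
  have hu2 : Uf z ^ 2 = 1 - z := by
    rw [Uf, sq, ← Complex.cpow_add _ _ h1z]
    norm_num
  have hs2 : Sf z ^ 2 = 1 + z := by
    rw [Sf, sq, ← Complex.cpow_add _ _ h2z]
    norm_num
  have hUne : Uf z ≠ 0 := by
    rw [Uf]
    simp only [ne_eq, Complex.cpow_eq_zero_iff, not_and_or, not_ne_iff]
    left
    exact h1z
  have h32 : (1 - z) ^ ((3 : ℂ) / 2) = (Uf z) ^ 3 := by
    rw [show (3 : ℂ) / 2 = 1 + 1 / 2 by norm_num, Complex.cpow_add _ _ h1z, Complex.cpow_one]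
    rw [show (1 - z) ^ ((1 : ℂ) / 2) = Uf z from rfl, ← hu2]
    ring
  have harg : Complex.arg (1 - z) + Complex.arg (1 + z) ∈ Set.Ioc (-Real.pi) Real.pi := by
    rcases lt_trichotomy z.im 0 with h | h | h
    · have ha1 : 0 ≤ Complex.arg (1 - z) := by
        rw [Complex.arg_nonneg_iff]
        simp only [Complex.sub_im, Complex.one_im, zero_sub]
        linarith
      have ha1' : Complex.arg (1 - z) ≤ Real.pi := Complex.arg_le_pi _
      have ha2 : Complex.arg (1 + z) < 0 := by
        rw [Complex.arg_neg_iff]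
        simpa [Complex.add_im] using h
      have ha2' : |Complex.arg (1 + z)| < Real.pi / 2 :=
        Complex.abs_arg_lt_pi_div_two_iff.mpr (Or.inl h2zre)
      constructor
      · have := (abs_lt.mp ha2').1
        linarith [Real.pi_pos]
      · linarith
    · have hzre : z.re < 1 := by
        by_contra hh
        push_neg at hh
        exact hzD ⟨h, Or.inl hh⟩
      have ha1 : Complex.arg (1 - z) = 0 := by
        rw [Complex.arg_eq_zero_iff]
        constructor
        · simp only [Complex.sub_re, Complex.one_re]; linarith
        · simp [Complex.sub_im, h]
      have ha2 : Complex.arg (1 + z) = 0 := by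
        rw [Complex.arg_eq_zero_iff]
        constructor
        · linarith
        · simp [Complex.add_im, h]
      rw [ha1, ha2]
      constructor
      · linarith [Real.pi_pos]
      · linarith [Real.pi_pos]
    · have ha1 : Complex.arg (1 - z) < 0 := by
        rw [Complex.arg_neg_iff]
        simp only [Complex.sub_im, Complex.one_im, zero_sub]
        linarith
      have ha1' : -Real.pi < Complex.arg (1 - z) := Complex.neg_pi_lt_arg _
      have ha2 : 0 ≤ Complex.arg (1 + z) := by
        rw [Complex.arg_nonneg_iff]
        simp only [Complex.add_im, Complex.one_im, zero_add]
        linarith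
      have ha2' : |Complex.arg (1 + z)| < Real.pi / 2 :=
        Complex.abs_arg_lt_pi_div_two_iff.mpr (Or.inl h2zre)
      constructor
      · linarith
      · have := (abs_lt.mp ha2').2
        linarith [Real.pi_pos]
  have hsqrt : (1 - z ^ 2) ^ ((1 : ℂ) / 2) = Uf z * Sf z := by
    rw [show (1 : ℂ) - z ^ 2 = (1 - z) * (1 + z) by ring]
    rw [Uf, Sf, Complex.cpow_def_of_ne_zero (mul_ne_zero h1z h2z),
      Complex.cpow_def_of_ne_zero h1z, Complex.cpow_def_of_ne_zero h2z,
      Complex.log_mul h1z h2z harg, add_mul, Complex.exp_add]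
  have hw : z + Complex.I * ((1 - z ^ 2) ^ ((1 : ℂ) / 2)) = 1 + Gf z := by
    rw [hsqrt, Gf]
    linear_combination hu2
  have hK : K1C z - z
      = (Complex.I * z * Complex.log (1 + Gf z) + Uf z * Sf z) / (Real.pi : ℂ) := by
    rw [K1C, hw, hsqrt]
    field_simp
    ring
  have hkey := key_alg (Uf z) (Sf z) z hu2 hs2
  have hkey' : Complex.I * z * Pf (Gf z) + Uf z * Sf z = (Uf z) ^ 3 * Qf (Uf z) (Sf z) := by
    rw [Gf]
    exact hkey
  have hnum : Complex.I * z * Complex.log (1 + Gf z) + Uf z * Sf z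
      = (Uf z) ^ 3 * Qf (Uf z) (Sf z) + Complex.I * z * (Complex.log (1 + Gf z) - Pf (Gf z)) := by
    linear_combination hkey'
  rw [hK, h32, Rf, hnum]
  field_simp

set_option maxHeartbeats 1000000 in
theorem k1_expansion_at_one :
    Tendsto (fun z : ℂ => (K1C z - z) / ((1 - z) ^ ((3 : ℂ) / 2)))
      (nhdsWithin 1 Dslit)
      (nhds ((2 * Real.sqrt 2 / (3 * Real.pi) : ℝ) : ℂ)) := by
  set f := nhdsWithin (1 : ℂ) Dslit with hf
  set s0 : ℂ := ((Real.sqrt 2 : ℝ) : ℂ) with hs0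
  have hz1 : Tendsto (fun z : ℂ => z) f (𝓝 1) := tendsto_id.mono_left nhdsWithin_le_nhds
  -- Uf → 0
  have hUnorm : ∀ z : ℂ, ‖Uf z‖ = Real.sqrt (‖1 - z‖) := by
    intro z
    rw [Uf, show ((1 : ℂ) / 2) = (((1 / 2 : ℝ) : ℝ) : ℂ) by norm_num]
    by_cases h : (1 : ℂ) - z = 0
    · rw [h, Complex.zero_cpow (by norm_num : (((1 / 2 : ℝ) : ℝ) : ℂ) ≠ 0)]
      simp
    · rw [Complex.norm_cpow_of_ne_zero h]
      rw [Complex.ofReal_re, Complex.ofReal_im]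
      simp only [mul_zero, Real.exp_zero, div_one]
      rw [Real.sqrt_eq_rpow]
  have hU : Tendsto Uf f (𝓝 0) := by
    rw [tendsto_zero_iff_norm_tendsto_zero]
    have h1 : Tendsto (fun z : ℂ => ‖1 - z‖) f (𝓝 0) := by
      have h0 : Tendsto (fun z : ℂ => (1 : ℂ) - z) f (𝓝 (1 - 1)) := hz1.const_sub 1
      rw [sub_self] at h0
      simpa using h0.norm
    have h2 : Tendsto (fun z : ℂ => Real.sqrt (‖1 - z‖)) f (𝓝 0) := by
      have := (Real.continuous_sqrt.tendsto 0).comp h1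
      simpa [Function.comp_def] using this
    exact h2.congr (fun z => (hUnorm z).symm)
  -- Sf → √2
  have hS : Tendsto Sf f (𝓝 s0) := by
    have hc1 : ContinuousAt (fun z : ℂ => 1 + z) 1 := by
      exact (continuous_const.add continuous_id).continuousAt
    have hc2 : ContinuousAt (fun x : ℂ => x ^ ((1 : ℂ) / 2)) ((1 : ℂ) + 1) :=
      continuousAt_cpow_const (by norm_num [Complex.mem_slitPlane_iff])
    have hcont : ContinuousAt Sf 1 := hc2.comp hc1
    have h2 : Sf 1 = s0 := by
      rw [Sf, show ((1 : ℂ) + 1) = ((2 : ℝ) : ℂ) by norm_num,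
        show ((1 : ℂ) / 2) = (((1 / 2 : ℝ) : ℝ) : ℂ) by norm_num,
        ← Complex.ofReal_cpow (by norm_num : (0 : ℝ) ≤ 2)]
      rw [hs0, ← Real.sqrt_eq_rpow]
    have := hcont.tendsto.comp hz1
    rw [show Sf 1 = s0 from h2] at this
    exact this
  -- Rf / Uf^3 → 0
  have hsqrt2_lt : Real.sqrt 2 < 3 / 2 := by
    nlinarith [Real.sq_sqrt (by norm_num : (0:ℝ) ≤ 2), Real.sqrt_nonneg 2]
  have hSbound : ∀ᶠ z in f, ‖Sf z‖ < 3 / 2 := by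
    apply Filter.Tendsto.eventually_lt hS.norm tendsto_const_nhds
    have hn : ‖s0‖ = Real.sqrt 2 := by
      rw [hs0, Complex.norm_real, Real.norm_eq_abs, _root_.abs_of_nonneg (Real.sqrt_nonneg 2)]
    rw [hn]
    exact hsqrt2_lt
  have hUbound : ∀ᶠ z in f, ‖Uf z‖ < 1 / 8 := by
    apply Filter.Tendsto.eventually_lt hU.norm tendsto_const_nhds
    norm_num
  have hR : Tendsto (fun z => Rf z / (Uf z) ^ 3) f (𝓝 0) := by
    apply squeeze_zero_norm' (a := fun z => 32 * ‖Uf z‖)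
    · filter_upwards [hSbound, hUbound] with z hs hu
      by_cases hu0 : Uf z = 0
      · simp only [hu0, ne_eq, OfNat.ofNat_ne_zero, not_false_eq_true, zero_pow, div_zero,
          norm_zero, norm_zero, mul_zero]
        positivity
      · have hg : ‖Gf z‖ ≤ 2 * ‖Uf z‖ := by
          rw [Gf]
          calc ‖Complex.I * Uf z * Sf z - Uf z ^ 2‖
              ≤ ‖Complex.I * Uf z * Sf z‖ + ‖Uf z ^ 2‖ := norm_sub_le _ _
            _ = ‖Uf z‖ * ‖Sf z‖ + ‖Uf z‖ ^ 2 := by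
                simp [norm_mul, norm_pow, Complex.norm_I]
            _ ≤ ‖Uf z‖ * (3 / 2) + ‖Uf z‖ * (1 / 8) := by
                have h1 : ‖Uf z‖ * ‖Sf z‖ ≤ ‖Uf z‖ * (3 / 2) :=
                  mul_le_mul_of_nonneg_left hs.le (norm_nonneg _)
                have h2 : ‖Uf z‖ ^ 2 ≤ ‖Uf z‖ * (1 / 8) := by
                  rw [sq]
                  exact mul_le_mul_of_nonneg_left hu.le (norm_nonneg _)
                linarith
            _ ≤ 2 * ‖Uf z‖ := by nlinarith [norm_nonneg (Uf z)]
        have hg12 : ‖Gf z‖ ≤ 1 / 2 := by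
          calc ‖Gf z‖ ≤ 2 * ‖Uf z‖ := hg
            _ ≤ 2 * (1 / 8) := by linarith
            _ ≤ 1 / 2 := by norm_num
        have htail := tail_bound hg12
        rw [Rf, norm_div, norm_pow]
        rw [div_le_iff₀ (pow_pos (norm_pos_iff.mpr hu0) 3)]
        calc ‖Complex.log (1 + Gf z) - Pf (Gf z)‖
            ≤ 2 * ‖Gf z‖ ^ 3 * ‖Gf z‖ := htail
          _ ≤ 2 * (2 * ‖Uf z‖) ^ 3 * (2 * ‖Uf z‖) := by
              have h3 : ‖Gf z‖ ^ 3 ≤ (2 * ‖Uf z‖) ^ 3 :=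
                pow_le_pow_left₀ (norm_nonneg _) hg 3
              nlinarith [norm_nonneg (Gf z), norm_nonneg (Uf z),
                pow_nonneg (norm_nonneg (Gf z)) 3]
          _ = 32 * ‖Uf z‖ * ‖Uf z‖ ^ 3 := by ring
    · have h0 := hU.norm
      simp only [norm_zero] at h0
      have h32 := h0.const_mul (32 : ℝ)
      simpa using h32
  -- Qf part
  have hQ : Tendsto (fun z => Qf (Uf z) (Sf z)) f (𝓝 (Qf 0 s0)) := by
    have h : Tendsto (fun z => Sf z ^ 3 / 3 + Complex.I * Uf z - Uf z ^ 2 * Sf z ^ 3 / 3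
        - 7 / 3 * Complex.I * Uf z ^ 3 + Uf z ^ 4 * Sf z + 4 / 3 * Complex.I * Uf z ^ 5) f
        (𝓝 (s0 ^ 3 / 3 + Complex.I * 0 - 0 ^ 2 * s0 ^ 3 / 3
          - 7 / 3 * Complex.I * 0 ^ 3 + 0 ^ 4 * s0 + 4 / 3 * Complex.I * 0 ^ 5)) :=
      ((((((hS.pow 3).div_const 3).add (tendsto_const_nhds.mul hU)).sub
        (((hU.pow 2).mul (hS.pow 3)).div_const 3)).sub
        (tendsto_const_nhds.mul (hU.pow 3))).add ((hU.pow 4).mul hS)).add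
        (tendsto_const_nhds.mul (hU.pow 5))
    have hq0 : Qf 0 s0 = s0 ^ 3 / 3 + Complex.I * 0 - 0 ^ 2 * s0 ^ 3 / 3
        - 7 / 3 * Complex.I * 0 ^ 3 + 0 ^ 4 * s0 + 4 / 3 * Complex.I * 0 ^ 5 := by
      rw [Qf]
    rw [hq0]
    exact h.congr (fun z => by rw [Qf])
  -- combine
  have hmain : Tendsto
      (fun z => (Qf (Uf z) (Sf z) + Complex.I * z * (Rf z / (Uf z) ^ 3)) / (Real.pi : ℂ))
      f (𝓝 ((Qf 0 s0 + Complex.I * 1 * 0) / (Real.pi : ℂ))) :=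
    (hQ.add (((tendsto_const_nhds (x := Complex.I)).mul hz1).mul hR)).div_const _
  have hval : (Qf 0 s0 + Complex.I * 1 * 0) / (Real.pi : ℂ)
      = ((2 * Real.sqrt 2 / (3 * Real.pi) : ℝ) : ℂ) := by
    have hπ : (Real.pi : ℂ) ≠ 0 := Complex.ofReal_ne_zero.mpr Real.pi_ne_zero
    have h23 : (Real.sqrt 2 : ℝ) ^ 3 = 2 * Real.sqrt 2 := by
      have := Real.sq_sqrt (by norm_num : (0:ℝ) ≤ 2)
      nlinarith [Real.sqrt_nonneg 2]
    rw [Qf, hs0]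
    push_cast [← h23]
    field_simp
    try ring
  rw [← hval]
  apply hmain.congr'
  have hball : ∀ᶠ z in f, ‖z - 1‖ < 1 / 4 := by
    have hmem : Metric.ball (1 : ℂ) (1 / 4) ∈ 𝓝 (1 : ℂ) :=
      Metric.ball_mem_nhds _ (by norm_num)
    have hle := nhdsWithin_le_nhds (a := (1 : ℂ)) (s := Dslit) hmem
    filter_upwards [hle] with z hz
    simpa [Metric.mem_ball, Complex.dist_eq] using hz
  have hD : ∀ᶠ z in f, z ∈ Dslit := eventually_mem_nhdsWithin
  filter_upwards [hball, hD] with z hb hzD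
  exact (main_eq hzD hb).symm
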